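/- Let ε > 0, p ∈ [1,∞], let X and Y be ℝ^d-valued random vectors defined on a common probability space with ‖X − Y‖_p < ε almost surely, and let 𝒜 be a countable measurable partition of ℝ^d. Suppose there is an integer Δ ≥ 0 such that every A ∈ 𝒜 satisfies #{B ∈ 𝒜 : B ≠ A and inf{‖x − y‖_p : x ∈ A, y ∈ B} < ε} ≤ Δ. Then |𝔈_𝒜(X) − 𝔈_𝒜(Y)| ≤ log₂(Δ + 1). -/

import Mathlib

open MeasureTheory
open scoped ENNReal

/-- The `ℓ_p` norm of a vector of `ℝ^d`, for `p ∈ [1,∞]` (`p = ∞` gives the sup-norm). -/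
noncomputable def lpNorm {d : ℕ} (p : ℝ≥0∞) (x : Fin d → ℝ) : ℝ :=
  if p = ∞ then ⨆ i, |x i| else (∑ i, |x i| ^ p.toReal) ^ (1 / p.toReal)

/-- The entropy summand `t ↦ t·log₂(1/t)` (equal to `0` at `t = 0`). -/
noncomputable def entTerm (t : ℝ) : ℝ := t * Real.logb 2 (1 / t)

lemma lpNorm_sub_comm {d : ℕ} (p : ℝ≥0∞) (x y : Fin d → ℝ) :
    lpNorm p (x - y) = lpNorm p (y - x) := by
  have h : ∀ i, |(x - y) i| = |(y - x) i| := by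
    intro i; simp [abs_sub_comm]
  unfold _root_.lpNorm
  simp only [h]

lemma entTerm_zero : entTerm 0 = 0 := by simp [entTerm]

lemma entTerm_eq (t : ℝ) : entTerm t = Real.negMulLog t / Real.log 2 := by
  rw [entTerm, Real.logb, Real.negMulLog, one_div, Real.log_inv]
  ring

lemma entTerm_nonneg {t : ℝ} (h0 : 0 ≤ t) (h1 : t ≤ 1) : 0 ≤ entTerm t := by
  rcases h0.eq_or_lt with h | h
  · simp [entTerm, ← h]
  · refine mul_nonneg h0 (Real.logb_nonneg one_lt_two ?_)
    rw [le_div_iff₀ h]; linarith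

/-- Sub-additivity direction: `entTerm` of a sum is at most the sum of `entTerm`s. -/
lemma entTerm_sum_le (T : Finset ℕ) (h : ℕ → ℝ) (h0 : ∀ m ∈ T, 0 ≤ h m) :
    entTerm (∑ m ∈ T, h m) ≤ ∑ m ∈ T, entTerm (h m) := by
  set q := ∑ m ∈ T, h m with hq
  have hq0 : 0 ≤ q := Finset.sum_nonneg h0
  have : entTerm q = ∑ m ∈ T, h m * Real.logb 2 (1 / q) := by
    rw [entTerm, hq, Finset.sum_mul]
  rw [this]
  refine Finset.sum_le_sum fun m hm => ?_
  rcases (h0 m hm).eq_or_lt with hz | hpos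
  · simp [entTerm, ← hz]
  · have hle : h m ≤ q := Finset.single_le_sum h0 hm
    have hqpos : 0 < q := lt_of_lt_of_le hpos hle
    have hlog : Real.logb 2 (1 / q) ≤ Real.logb 2 (1 / h m) := by
      refine Real.logb_le_logb_of_le one_lt_two (by positivity) ?_
      exact one_div_le_one_div_of_le hpos hle
    rw [entTerm]
    exact mul_le_mul_of_nonneg_left hlog hpos.le

/-- Jensen direction: sum of `entTerm`s is at most `entTerm` of the sum plus
the sum times `log₂` of the number of summands. -/
lemma sum_entTerm_le (S : Finset ℕ) (h : ℕ → ℝ) (h0 : ∀ n ∈ S, 0 ≤ h n) :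
    ∑ n ∈ S, entTerm (h n) ≤ entTerm (∑ n ∈ S, h n)
      + (∑ n ∈ S, h n) * Real.logb 2 S.card := by
  rcases S.eq_empty_or_nonempty with rfl | hS
  · simp [entTerm]
  set r := ∑ n ∈ S, h n with hr
  have hr0 : 0 ≤ r := Finset.sum_nonneg h0
  rcases hr0.eq_or_lt with hrz | hrpos
  · have hall : ∀ n ∈ S, h n = 0 := by
      intro n hn
      exact (Finset.sum_eq_zero_iff_of_nonneg h0).mp hrz.symm n hn
    have h1 : ∑ n ∈ S, entTerm (h n) = 0 :=
      Finset.sum_eq_zero fun n hn => by rw [hall n hn, entTerm_zero]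
    rw [h1, ← hrz, entTerm_zero]
    simp
  · -- main case, via concavity of negMulLog
    have hk0 : 0 < (S.card : ℝ) := by
      exact_mod_cast Finset.card_pos.mpr hS
    have hw1 : ∑ _n ∈ S, (S.card : ℝ)⁻¹ = 1 := by
      rw [Finset.sum_const, nsmul_eq_mul]
      field_simp
    have hjensen := Real.concaveOn_negMulLog.le_map_sum
      (t := S) (w := fun _ => (S.card : ℝ)⁻¹) (p := h)
      (fun i _ => by positivity) hw1 (fun i hi => h0 i hi)
    have harg : ∑ n ∈ S, (S.card : ℝ)⁻¹ • h n = (S.card : ℝ)⁻¹ * r := by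
      simp only [smul_eq_mul, ← Finset.mul_sum, hr]
    have hlhs : ∑ n ∈ S, (S.card : ℝ)⁻¹ • Real.negMulLog (h n)
        = (S.card : ℝ)⁻¹ * ∑ n ∈ S, Real.negMulLog (h n) := by
      simp only [smul_eq_mul, ← Finset.mul_sum]
    rw [harg, hlhs] at hjensen
    have hrhs : Real.negMulLog ((S.card : ℝ)⁻¹ * r)
        = (S.card : ℝ)⁻¹ * (Real.negMulLog r + r * Real.log S.card) := by
      rw [Real.negMulLog, Real.log_mul (by positivity) (ne_of_gt hrpos),
        Real.log_inv, Real.negMulLog]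
      ring
    rw [hrhs] at hjensen
    have hmain : ∑ n ∈ S, Real.negMulLog (h n)
        ≤ Real.negMulLog r + r * Real.log S.card := by
      have := mul_le_mul_of_nonneg_left hjensen hk0.le
      rwa [← mul_assoc, ← mul_assoc, mul_inv_cancel₀ (ne_of_gt hk0), one_mul, one_mul] at this
    have hlog2 : (0:ℝ) < Real.log 2 := Real.log_pos one_lt_two
    have hconv : ∀ t : ℝ, entTerm t = Real.negMulLog t / Real.log 2 := entTerm_eq
    calc ∑ n ∈ S, entTerm (h n)
        = (∑ n ∈ S, Real.negMulLog (h n)) / Real.log 2 := by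
          rw [Finset.sum_div]; exact Finset.sum_congr rfl fun n _ => hconv (h n)
      _ ≤ (Real.negMulLog r + r * Real.log S.card) / Real.log 2 := by
          gcongr
      _ = entTerm r + r * Real.logb 2 S.card := by
          rw [hconv, Real.logb]; ring

/-- One-sided entropy comparison in `ℝ≥0∞`. -/
lemma oneSide {Ω : Type} [MeasurableSpace Ω] (μ : Measure Ω) [IsProbabilityMeasure μ]
    {d : ℕ} (p : ℝ≥0∞) (ε : ℝ)
    (X Y : Ω → (Fin d → ℝ)) (hX : Measurable X) (hY : Measurable Y)
    (hclose : ∀ᵐ ω ∂μ, lpNorm p (X ω - Y ω) < ε)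
    (A : ℕ → Set (Fin d → ℝ)) (hAmeas : ∀ n, MeasurableSet (A n))
    (hAdisj : Pairwise (Function.onFun Disjoint A)) (hAcover : ⋃ n, A n = Set.univ)
    (Δ : ℕ)
    (hΔ : ∀ n : ℕ,
      {m : ℕ | m ≠ n ∧ ∃ x ∈ A n, ∃ y ∈ A m, lpNorm p (x - y) < ε}.encard ≤ (Δ : ℕ∞)) :
    (∑' n, ENNReal.ofReal (entTerm (μ (X ⁻¹' A n)).toReal))
      ≤ (∑' n, ENNReal.ofReal (entTerm (μ (Y ⁻¹' A n)).toReal))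
        + ENNReal.ofReal (Real.logb 2 (Δ + 1)) := by
  classical
  set π : ℕ → ℕ → ℝ≥0∞ := fun n m => μ (X ⁻¹' A n ∩ Y ⁻¹' A m) with hπ
  have hπ_top : ∀ n m, π n m ≠ ∞ := fun n m => measure_ne_top μ _
  have hXcover : (⋃ n, X ⁻¹' A n) = Set.univ := by
    rw [← Set.preimage_iUnion, hAcover, Set.preimage_univ]
  have hYcover : (⋃ m, Y ⁻¹' A m) = Set.univ := by
    rw [← Set.preimage_iUnion, hAcover, Set.preimage_univ]
  have hmeasXY : ∀ n m, MeasurableSet (X ⁻¹' A n ∩ Y ⁻¹' A m) :=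
    fun n m => (hX (hAmeas n)).inter (hY (hAmeas m))
  have hrow : ∀ n, ∑' m, π n m = μ (X ⁻¹' A n) := by
    intro n
    have hset : X ⁻¹' A n = ⋃ m, (X ⁻¹' A n ∩ Y ⁻¹' A m) := by
      rw [← Set.inter_iUnion, hYcover, Set.inter_univ]
    have hdisj : Pairwise (Function.onFun Disjoint fun m => X ⁻¹' A n ∩ Y ⁻¹' A m) := by
      intro i j hij
      exact Set.disjoint_of_subset Set.inter_subset_right Set.inter_subset_right
        ((hAdisj hij).preimage Y)
    rw [hset]
    exact (measure_iUnion hdisj (fun m => hmeasXY n m)).symm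
  have hcol : ∀ m, ∑' n, π n m = μ (Y ⁻¹' A m) := by
    intro m
    have hset : Y ⁻¹' A m = ⋃ n, (X ⁻¹' A n ∩ Y ⁻¹' A m) := by
      rw [← Set.iUnion_inter, hXcover, Set.univ_inter]
    have hdisj : Pairwise (Function.onFun Disjoint fun n => X ⁻¹' A n ∩ Y ⁻¹' A m) := by
      intro i j hij
      exact Set.disjoint_of_subset Set.inter_subset_left Set.inter_subset_left
        ((hAdisj hij).preimage X)
    rw [hset]
    exact (measure_iUnion hdisj (fun n => hmeasXY n m)).symm
  have hsum_r : ∑' m, μ (Y ⁻¹' A m) = 1 := by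
    have hdisj : Pairwise (Function.onFun Disjoint fun m => Y ⁻¹' A m) :=
      fun i j hij => (hAdisj hij).preimage Y
    rw [← measure_iUnion hdisj (fun m => hY (hAmeas m)), hYcover, measure_univ]
  have hg1 : ∀ n m, (π n m).toReal ≤ 1 := by
    intro n m
    have h1 : π n m ≤ 1 := prob_le_one
    simpa using ENNReal.toReal_mono ENNReal.one_ne_top h1
  have hbad : μ {ω | ¬ lpNorm p (X ω - Y ω) < ε} = 0 := ae_iff.mp hclose
  have hzero : ∀ n m, π n m ≠ 0 →
      n = m ∨ ∃ x ∈ A n, ∃ y ∈ A m, lpNorm p (x - y) < ε := by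
    intro n m hne
    by_contra hcon
    push_neg at hcon
    obtain ⟨hnm, hno⟩ := hcon
    apply hne
    refine measure_mono_null ?_ hbad
    intro ω hω
    simp only [Set.mem_setOf_eq, not_lt]
    exact hno (X ω) hω.1 (Y ω) hω.2
  -- row support finite
  have hMfin : ∀ n, {m | π n m ≠ 0}.Finite := by
    intro n
    refine Set.Finite.subset ((Set.finite_singleton n).union
      (Set.finite_of_encard_le_coe (hΔ n))) ?_
    intro m hm
    rcases hzero n m hm with h | h
    · left; exact h.symm
    · by_cases hmn : m = n
      · left; exact hmn
      · right; exact ⟨hmn, h⟩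
  -- column support finite with cardinality bound
  have hNsub : ∀ m, {n | π n m ≠ 0} ⊆
      {m} ∪ {n | n ≠ m ∧ ∃ x ∈ A m, ∃ y ∈ A n, lpNorm p (x - y) < ε} := by
    intro m n hn
    by_cases hnm : n = m
    · left; exact hnm
    · right
      rcases hzero n m hn with h | h
      · exact absurd h hnm
      · obtain ⟨x, hx, y, hy, hxy⟩ := h
        exact ⟨hnm, y, hy, x, hx, by rwa [lpNorm_sub_comm]⟩
  have hNfin : ∀ m, {n | π n m ≠ 0}.Finite := fun m =>
    Set.Finite.subset ((Set.finite_singleton m).union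
      (Set.finite_of_encard_le_coe (hΔ m))) (hNsub m)
  let M : ℕ → Finset ℕ := fun n => (hMfin n).toFinset
  let N : ℕ → Finset ℕ := fun m => (hNfin m).toFinset
  have hNcard : ∀ m, (N m).card ≤ Δ + 1 := by
    intro m
    have h1 : ((N m).card : ℕ∞) = {n | π n m ≠ 0}.encard :=
      ((hNfin m).encard_eq_coe_toFinset_card).symm
    have h2 : {n | π n m ≠ 0}.encard ≤ (Δ : ℕ∞) + 1 := by
      refine le_trans (Set.encard_le_encard (hNsub m)) ?_
      refine le_trans (Set.encard_union_le _ _) ?_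
      rw [Set.encard_singleton]
      calc (1 : ℕ∞) + _ ≤ 1 + (Δ : ℕ∞) := add_le_add_right (hΔ m) 1
        _ = (Δ : ℕ∞) + 1 := add_comm _ _
    rw [← h1] at h2
    exact_mod_cast h2
  have hqf : ∀ n, (μ (X ⁻¹' A n)).toReal = ∑ m ∈ M n, (π n m).toReal := by
    intro n
    rw [← hrow n, tsum_eq_sum (s := M n) ?_, ENNReal.toReal_sum (fun m _ => hπ_top n m)]
    intro m hm
    simp only [M, (hMfin n).mem_toFinset, Set.mem_setOf_eq, not_not] at hm
    exact hm
  have hrf : ∀ m, (μ (Y ⁻¹' A m)).toReal = ∑ n ∈ N m, (π n m).toReal := by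
    intro m
    rw [← hcol m, tsum_eq_sum (s := N m) ?_, ENNReal.toReal_sum (fun n _ => hπ_top n m)]
    intro n hn
    simp only [N, (hNfin m).mem_toFinset, Set.mem_setOf_eq, not_not] at hn
    exact hn
  set c := ENNReal.ofReal (Real.logb 2 (Δ + 1)) with hc
  have hlogΔ : 0 ≤ Real.logb 2 ((Δ : ℝ) + 1) := by
    refine Real.logb_nonneg one_lt_two ?_
    have : (0:ℝ) ≤ Δ := Nat.cast_nonneg Δ
    linarith
  have step1 : ∀ n, ENNReal.ofReal (entTerm (μ (X ⁻¹' A n)).toReal)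
      ≤ ∑' m, ENNReal.ofReal (entTerm ((π n m).toReal)) := by
    intro n
    calc ENNReal.ofReal (entTerm (μ (X ⁻¹' A n)).toReal)
        ≤ ENNReal.ofReal (∑ m ∈ M n, entTerm ((π n m).toReal)) := by
          apply ENNReal.ofReal_le_ofReal
          rw [hqf n]
          exact entTerm_sum_le (M n) _ (fun m _ => ENNReal.toReal_nonneg)
      _ = ∑ m ∈ M n, ENNReal.ofReal (entTerm ((π n m).toReal)) :=
          ENNReal.ofReal_sum_of_nonneg
            (fun m _ => entTerm_nonneg ENNReal.toReal_nonneg (hg1 n m))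
      _ ≤ ∑' m, ENNReal.ofReal (entTerm ((π n m).toReal)) := ENNReal.sum_le_tsum _
  have step2 : ∀ m, (∑' n, ENNReal.ofReal (entTerm ((π n m).toReal)))
      ≤ ENNReal.ofReal (entTerm (μ (Y ⁻¹' A m)).toReal) + μ (Y ⁻¹' A m) * c := by
    intro m
    have hts : ∑' n, ENNReal.ofReal (entTerm ((π n m).toReal))
        = ∑ n ∈ N m, ENNReal.ofReal (entTerm ((π n m).toReal)) := by
      refine tsum_eq_sum ?_
      intro n hn
      simp only [N, (hNfin m).mem_toFinset, Set.mem_setOf_eq, not_not] at hn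
      rw [hn]
      simp [entTerm_zero]
    have hlogcard : Real.logb 2 ((N m).card) ≤ Real.logb 2 ((Δ : ℝ) + 1) := by
      rcases Nat.eq_zero_or_pos (N m).card with h0 | hpos
      · rw [h0]; simpa using hlogΔ
      · refine Real.logb_le_logb_of_le one_lt_two (by exact_mod_cast hpos) ?_
        have := hNcard m
        exact_mod_cast this
    have hA := sum_entTerm_le (N m) (fun n => (π n m).toReal)
      (fun n _ => ENNReal.toReal_nonneg)
    rw [← hrf m] at hA
    have hA2 : ∑ n ∈ N m, entTerm ((π n m).toReal)
        ≤ entTerm (μ (Y ⁻¹' A m)).toReal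
          + (μ (Y ⁻¹' A m)).toReal * Real.logb 2 ((Δ : ℝ) + 1) := by
      refine hA.trans ?_
      exact add_le_add_right
        (mul_le_mul_of_nonneg_left hlogcard ENNReal.toReal_nonneg) _
    calc ∑' n, ENNReal.ofReal (entTerm ((π n m).toReal))
        = ENNReal.ofReal (∑ n ∈ N m, entTerm ((π n m).toReal)) := by
          rw [hts, ENNReal.ofReal_sum_of_nonneg
            (fun n _ => entTerm_nonneg ENNReal.toReal_nonneg (hg1 n m))]
      _ ≤ ENNReal.ofReal (entTerm (μ (Y ⁻¹' A m)).toReal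
            + (μ (Y ⁻¹' A m)).toReal * Real.logb 2 ((Δ : ℝ) + 1)) :=
          ENNReal.ofReal_le_ofReal hA2
      _ ≤ ENNReal.ofReal (entTerm (μ (Y ⁻¹' A m)).toReal)
            + ENNReal.ofReal ((μ (Y ⁻¹' A m)).toReal * Real.logb 2 ((Δ : ℝ) + 1)) :=
          ENNReal.ofReal_add_le
      _ = ENNReal.ofReal (entTerm (μ (Y ⁻¹' A m)).toReal) + μ (Y ⁻¹' A m) * c := by
          rw [ENNReal.ofReal_mul ENNReal.toReal_nonneg,
            ENNReal.ofReal_toReal (measure_ne_top μ _)]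
  calc ∑' n, ENNReal.ofReal (entTerm (μ (X ⁻¹' A n)).toReal)
      ≤ ∑' n, ∑' m, ENNReal.ofReal (entTerm ((π n m).toReal)) :=
        ENNReal.tsum_le_tsum step1
    _ = ∑' m, ∑' n, ENNReal.ofReal (entTerm ((π n m).toReal)) := ENNReal.tsum_comm
    _ ≤ ∑' m, (ENNReal.ofReal (entTerm (μ (Y ⁻¹' A m)).toReal) + μ (Y ⁻¹' A m) * c) :=
        ENNReal.tsum_le_tsum step2
    _ = (∑' m, ENNReal.ofReal (entTerm (μ (Y ⁻¹' A m)).toReal))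
          + (∑' m, μ (Y ⁻¹' A m)) * c := by
        rw [ENNReal.tsum_add, ENNReal.tsum_mul_right]
    _ = (∑' m, ENNReal.ofReal (entTerm (μ (Y ⁻¹' A m)).toReal)) + c := by
        rw [hsum_r, one_mul]

theorem partition_entropy_close
    {Ω : Type} [MeasurableSpace Ω] (μ : Measure Ω) [IsProbabilityMeasure μ]
    {d : ℕ} (p : ℝ≥0∞) (hp : 1 ≤ p) (ε : ℝ) (hε : 0 < ε)
    (X Y : Ω → (Fin d → ℝ)) (hX : Measurable X) (hY : Measurable Y)
    (hclose : ∀ᵐ ω ∂μ, lpNorm p (X ω - Y ω) < ε)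
    (A : ℕ → Set (Fin d → ℝ)) (hAmeas : ∀ n, MeasurableSet (A n))
    (hAdisj : Pairwise (Function.onFun Disjoint A)) (hAcover : ⋃ n, A n = Set.univ)
    (Δ : ℕ)
    (hΔ : ∀ n : ℕ,
      {m : ℕ | m ≠ n ∧ ∃ x ∈ A n, ∃ y ∈ A m, lpNorm p (x - y) < ε}.encard ≤ (Δ : ℕ∞)) :
    |(∑' n : ℕ, entTerm (μ (X ⁻¹' A n)).toReal)
        - ∑' n : ℕ, entTerm (μ (Y ⁻¹' A n)).toReal| ≤ Real.logb 2 (Δ + 1) := by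
  have hclose' : ∀ᵐ ω ∂μ, lpNorm p (Y ω - X ω) < ε := by
    filter_upwards [hclose] with ω h
    rwa [lpNorm_sub_comm] at h
  have h1 := oneSide μ p ε X Y hX hY hclose A hAmeas hAdisj hAcover Δ hΔ
  have h2 := oneSide μ p ε Y X hY hX hclose' A hAmeas hAdisj hAcover Δ hΔ
  set Ex := ∑' n, ENNReal.ofReal (entTerm (μ (X ⁻¹' A n)).toReal) with hEx
  set Ey := ∑' n, ENNReal.ofReal (entTerm (μ (Y ⁻¹' A n)).toReal) with hEy
  set c := ENNReal.ofReal (Real.logb 2 (Δ + 1)) with hc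
  have hlogΔ : 0 ≤ Real.logb 2 ((Δ : ℝ) + 1) := by
    refine Real.logb_nonneg one_lt_two ?_
    have : (0:ℝ) ≤ Δ := Nat.cast_nonneg Δ
    linarith
  have hcval : c.toReal = Real.logb 2 ((Δ : ℝ) + 1) := ENNReal.toReal_ofReal hlogΔ
  have hc_top : c ≠ ∞ := ENNReal.ofReal_ne_top
  have hg01 : ∀ (Z : Ω → (Fin d → ℝ)) (n : ℕ), 0 ≤ (μ (Z ⁻¹' A n)).toReal ∧
      (μ (Z ⁻¹' A n)).toReal ≤ 1 := by
    intro Z n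
    refine ⟨ENNReal.toReal_nonneg, ?_⟩
    simpa using ENNReal.toReal_mono ENNReal.one_ne_top (prob_le_one (μ := μ))
  have hxval : (∑' n : ℕ, entTerm (μ (X ⁻¹' A n)).toReal) = Ex.toReal := by
    rw [hEx, ENNReal.tsum_toReal_eq (fun n => ENNReal.ofReal_ne_top)]
    exact tsum_congr fun n => (ENNReal.toReal_ofReal
      (entTerm_nonneg (hg01 X n).1 (hg01 X n).2)).symm
  have hyval : (∑' n : ℕ, entTerm (μ (Y ⁻¹' A n)).toReal) = Ey.toReal := by
    rw [hEy, ENNReal.tsum_toReal_eq (fun n => ENNReal.ofReal_ne_top)]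
    exact tsum_congr fun n => (ENNReal.toReal_ofReal
      (entTerm_nonneg (hg01 Y n).1 (hg01 Y n).2)).symm
  rw [hxval, hyval]
  by_cases hxtop : Ex = ∞
  · have hytop : Ey = ∞ := by
      by_contra hy
      have : Ex ≠ ∞ := by
        intro hx
        rw [hx] at h1
        exact (ENNReal.add_ne_top.mpr ⟨hy, hc_top⟩) (top_le_iff.mp h1)
      exact this hxtop
    rw [hxtop, hytop]
    simpa using hlogΔ
  · have hytop : Ey ≠ ∞ := by
      intro hy
      rw [hy] at h2
      exact (ENNReal.add_ne_top.mpr ⟨hxtop, hc_top⟩) (top_le_iff.mp h2)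
    rw [abs_sub_le_iff]
    constructor
    · have := ENNReal.toReal_mono (ENNReal.add_ne_top.mpr ⟨hytop, hc_top⟩) h1
      rw [ENNReal.toReal_add hytop hc_top, hcval] at this
      linarith
    · have := ENNReal.toReal_mono (ENNReal.add_ne_top.mpr ⟨hxtop, hc_top⟩) h2
      rw [ENNReal.toReal_add hxtop hc_top, hcval] at this
      linarith
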